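/- Let H be a finite arrangement of hyperplanes in ℂP^n with positive real weights a_H. If the inequality ∑_{H ⊇ L} a_H < codim L holds for every nonempty proper intersection subspace L of the arrangement that is irreducible, then it holds for every nonempty proper intersection subspace L, and in fact for every nonempty proper linear subspace L ⊂ ℂP^n. -/

import Mathlib

open scoped Classical

/-- Codimension of a linear subspace of `ℂ^{n+1}` (equivalently, of the corresponding
projective subspace of `ℂP^n`). -/
noncomputable def codim (n : ℕ) (L : Submodule ℂ (Fin (n + 1) → ℂ)) : ℕ :=
  (n + 1) - Module.finrank ℂ L

/-- `L` is an intersection of members of the arrangement `𝓗` (the empty intersection is `⊤`). -/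
def IsIntersection (n : ℕ) (𝓗 : Finset (Submodule ℂ (Fin (n + 1) → ℂ)))
    (L : Submodule ℂ (Fin (n + 1) → ℂ)) : Prop :=
  ∃ S ⊆ 𝓗, L = S.inf id

/-- The localization `𝓗_L`: hyperplanes of the arrangement containing `L`. -/
noncomputable def localization (n : ℕ) (𝓗 : Finset (Submodule ℂ (Fin (n + 1) → ℂ)))
    (L : Submodule ℂ (Fin (n + 1) → ℂ)) : Finset (Submodule ℂ (Fin (n + 1) → ℂ)) :=
  𝓗.filter fun H => L ≤ H

/-- The arrangement admits a nontrivial splitting `𝓗 = 𝓗₁ ⊎ 𝓗₂` whose centres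
`T₁ = ⨅ 𝓗₁`, `T₂ = ⨅ 𝓗₂` satisfy `T₁ + T₂ = ℂP^n` (linearly, `T₁ ⊔ T₂ = ⊤`). -/
def HasSplitting (n : ℕ) (𝓗 : Finset (Submodule ℂ (Fin (n + 1) → ℂ))) : Prop :=
  ∃ 𝓗₁ 𝓗₂ : Finset (Submodule ℂ (Fin (n + 1) → ℂ)),
    𝓗₁.Nonempty ∧ 𝓗₂.Nonempty ∧ 𝓗 = 𝓗₁ ∪ 𝓗₂ ∧ (𝓗₁.inf id ⊔ 𝓗₂.inf id) = ⊤

/-- `L` is a nonempty proper irreducible intersection subspace of the arrangement: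
the localized arrangement `𝓗_L` admits no nontrivial splitting. -/
noncomputable def IsIrredSubspace (n : ℕ) (𝓗 : Finset (Submodule ℂ (Fin (n + 1) → ℂ)))
    (L : Submodule ℂ (Fin (n + 1) → ℂ)) : Prop :=
  IsIntersection n 𝓗 L ∧ L ≠ ⊥ ∧ L ≠ ⊤ ∧ ¬HasSplitting n (localization n 𝓗 L)

lemma finrank_total (n : ℕ) : Module.finrank ℂ (Fin (n + 1) → ℂ) = n + 1 := by
  simp [Module.finrank_pi]

lemma codim_pos (n : ℕ) {L : Submodule ℂ (Fin (n + 1) → ℂ)} (hL : L ≠ ⊤) :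
    0 < codim n L := by
  have := Submodule.finrank_lt (K := ℂ) (V := Fin (n + 1) → ℂ) hL
  rw [finrank_total] at this
  unfold codim; omega

lemma key (n : ℕ) (𝓗 : Finset (Submodule ℂ (Fin (n + 1) → ℂ)))
    (hhyp : ∀ H ∈ 𝓗, Module.finrank ℂ H = n)
    (a : Submodule ℂ (Fin (n + 1) → ℂ) → ℝ) (ha : ∀ H ∈ 𝓗, 0 < a H)
    (hirr : ∀ L, IsIrredSubspace n 𝓗 L →
      ∑ H ∈ localization n 𝓗 L, a H < (codim n L : ℝ)) :
    ∀ c : ℕ, ∀ L, codim n L ≤ c → IsIntersection n 𝓗 L → L ≠ ⊥ → L ≠ ⊤ →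
      ∑ H ∈ localization n 𝓗 L, a H < (codim n L : ℝ) := by
  have hHne : ∀ H ∈ 𝓗, H ≠ ⊤ := by
    intro H hH hTop
    have := hhyp H hH
    rw [hTop, finrank_top, finrank_total] at this
    omega
  intro c
  induction c with
  | zero =>
    intro L hc _ _ hT
    exact absurd hc (by have := codim_pos n hT; omega)
  | succ c ih =>
    intro L hc hint hbot htop
    by_cases hs : HasSplitting n (localization n 𝓗 L)
    · obtain ⟨S₁, S₂, hne₁, hne₂, hun, hsup⟩ := hs
      -- L equals the inf of its localization
      obtain ⟨S, hS𝓗, hLS⟩ := hint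
      have hSsub : S ⊆ localization n 𝓗 L := fun H hH =>
        Finset.mem_filter.2 ⟨hS𝓗 hH, hLS ▸ Finset.inf_le hH⟩
      have hLloc : L = (localization n 𝓗 L).inf id :=
        le_antisymm (Finset.le_inf fun H hH => (Finset.mem_filter.1 hH).2)
          (le_of_le_of_eq (Finset.inf_mono hSsub) hLS.symm)
      set T₁ := S₁.inf id with hT₁
      set T₂ := S₂.inf id with hT₂
      have hLT : L = T₁ ⊓ T₂ := by rw [hLloc, hun, Finset.inf_union]
      have hS₁𝓗 : S₁ ⊆ 𝓗 := fun H hH =>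
        Finset.filter_subset _ _ (hun ▸ Finset.mem_union_left _ hH)
      have hS₂𝓗 : S₂ ⊆ 𝓗 := fun H hH =>
        Finset.filter_subset _ _ (hun ▸ Finset.mem_union_right _ hH)
      have hLT₁ : L ≤ T₁ := hLT ▸ inf_le_left
      have hLT₂ : L ≤ T₂ := hLT ▸ inf_le_right
      have hT₁bot : T₁ ≠ ⊥ := fun h => hbot (le_bot_iff.1 (h ▸ hLT₁))
      have hT₂bot : T₂ ≠ ⊥ := fun h => hbot (le_bot_iff.1 (h ▸ hLT₂))
      have hT₁top : T₁ ≠ ⊤ := by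
        obtain ⟨H, hH⟩ := hne₁
        intro h
        exact hHne H (hS₁𝓗 hH) (top_le_iff.1 (h ▸ Finset.inf_le hH))
      have hT₂top : T₂ ≠ ⊤ := by
        obtain ⟨H, hH⟩ := hne₂
        intro h
        exact hHne H (hS₂𝓗 hH) (top_le_iff.1 (h ▸ Finset.inf_le hH))
      -- codimension additivity
      have hrk := Submodule.finrank_sup_add_finrank_inf_eq T₁ T₂
      rw [hsup, finrank_top, finrank_total] at hrk
      have hle₁ : Module.finrank ℂ T₁ ≤ n + 1 := by
        have := Submodule.finrank_le T₁; rwa [finrank_total] at this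
      have hle₂ : Module.finrank ℂ T₂ ≤ n + 1 := by
        have := Submodule.finrank_le T₂; rwa [finrank_total] at this
      have hlt₁ : Module.finrank ℂ T₁ < n + 1 := by
        have := Submodule.finrank_lt (K := ℂ) hT₁top
        rwa [finrank_total] at this
      have hlt₂ : Module.finrank ℂ T₂ < n + 1 := by
        have := Submodule.finrank_lt (K := ℂ) hT₂top
        rwa [finrank_total] at this
      have hcodim : codim n L = codim n T₁ + codim n T₂ := by
        have : Module.finrank ℂ L = Module.finrank ℂ (T₁ ⊓ T₂ : Submodule ℂ _) := by
          rw [hLT]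
        unfold codim; omega
      have hc₁ : codim n T₁ ≤ c := by
        have := codim_pos n hT₂top; omega
      have hc₂ : codim n T₂ ≤ c := by
        have := codim_pos n hT₁top; omega
      have ih₁ := ih T₁ hc₁ ⟨S₁, hS₁𝓗, rfl⟩ hT₁bot hT₁top
      have ih₂ := ih T₂ hc₂ ⟨S₂, hS₂𝓗, rfl⟩ hT₂bot hT₂top
      -- sum estimates
      have hS₁loc : S₁ ⊆ localization n 𝓗 T₁ := fun H hH =>
        Finset.mem_filter.2 ⟨hS₁𝓗 hH, Finset.inf_le hH⟩
      have hS₂loc : S₂ ⊆ localization n 𝓗 T₂ := fun H hH =>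
        Finset.mem_filter.2 ⟨hS₂𝓗 hH, Finset.inf_le hH⟩
      have hnn : ∀ H ∈ 𝓗, 0 ≤ a H := fun H hH => (ha H hH).le
      have hsum₁ : ∑ H ∈ S₁, a H ≤ ∑ H ∈ localization n 𝓗 T₁, a H :=
        Finset.sum_le_sum_of_subset_of_nonneg hS₁loc
          (fun H hH _ => hnn H (Finset.filter_subset _ _ hH))
      have hsum₂ : ∑ H ∈ S₂, a H ≤ ∑ H ∈ localization n 𝓗 T₂, a H :=
        Finset.sum_le_sum_of_subset_of_nonneg hS₂loc
          (fun H hH _ => hnn H (Finset.filter_subset _ _ hH))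
      have hunion : ∑ H ∈ localization n 𝓗 L, a H ≤ ∑ H ∈ S₁, a H + ∑ H ∈ S₂, a H := by
        rw [hun]
        calc ∑ H ∈ S₁ ∪ S₂, a H = ∑ H ∈ S₁, a H + ∑ H ∈ S₂ \ S₁, a H := by
              rw [← Finset.union_sdiff_self_eq_union, Finset.sum_union Finset.disjoint_sdiff]
          _ ≤ ∑ H ∈ S₁, a H + ∑ H ∈ S₂, a H :=
              add_le_add le_rfl (Finset.sum_le_sum_of_subset_of_nonneg Finset.sdiff_subset
                (fun H hH _ => hnn H (hS₂𝓗 hH)))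
      calc ∑ H ∈ localization n 𝓗 L, a H
          ≤ ∑ H ∈ S₁, a H + ∑ H ∈ S₂, a H := hunion
        _ ≤ ∑ H ∈ localization n 𝓗 T₁, a H + ∑ H ∈ localization n 𝓗 T₂, a H := by
            gcongr
        _ < (codim n T₁ : ℝ) + (codim n T₂ : ℝ) := by gcongr
        _ = (codim n L : ℝ) := by rw [hcodim]; push_cast; ring
    · exact hirr L ⟨hint, hbot, htop, hs⟩


/-- If the klt inequality `∑_{H ⊇ L} a_H < codim L` holds for every irreducible nonempty proper
intersection subspace, then it holds for every nonempty proper intersection subspace, and in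
fact for every nonempty proper linear subspace `L`. -/
theorem stmt_3 (n : ℕ) (𝓗 : Finset (Submodule ℂ (Fin (n + 1) → ℂ)))
    (hhyp : ∀ H ∈ 𝓗, Module.finrank ℂ H = n)
    (a : Submodule ℂ (Fin (n + 1) → ℂ) → ℝ) (ha : ∀ H ∈ 𝓗, 0 < a H)
    (hirr : ∀ L, IsIrredSubspace n 𝓗 L →
      ∑ H ∈ localization n 𝓗 L, a H < (codim n L : ℝ)) :
    (∀ L, IsIntersection n 𝓗 L → L ≠ ⊥ → L ≠ ⊤ →
      ∑ H ∈ localization n 𝓗 L, a H < (codim n L : ℝ)) ∧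
    (∀ L : Submodule ℂ (Fin (n + 1) → ℂ), L ≠ ⊥ → L ≠ ⊤ →
      ∑ H ∈ localization n 𝓗 L, a H < (codim n L : ℝ)) := by
  have main : ∀ L, IsIntersection n 𝓗 L → L ≠ ⊥ → L ≠ ⊤ →
      ∑ H ∈ localization n 𝓗 L, a H < (codim n L : ℝ) :=
    fun L hint hbot htop => key n 𝓗 hhyp a ha hirr (codim n L) L le_rfl hint hbot htop
  refine ⟨main, fun L hbot htop => ?_⟩
  by_cases hne : (localization n 𝓗 L).Nonempty
  · set L' := (localization n 𝓗 L).inf id with hL'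
    have hLL' : L ≤ L' := Finset.le_inf fun H hH => (Finset.mem_filter.1 hH).2
    have hL'bot : L' ≠ ⊥ := fun h => hbot (le_bot_iff.1 (h ▸ hLL'))
    have hL'top : L' ≠ ⊤ := by
      obtain ⟨H, hH⟩ := hne
      intro h
      have hH𝓗 : H ∈ 𝓗 := Finset.filter_subset _ _ hH
      have : Module.finrank ℂ H = n + 1 := by
        have hHt : H = ⊤ := top_le_iff.1 (h ▸ Finset.inf_le hH)
        rw [hHt, finrank_top, finrank_total]
      have := hhyp H hH𝓗
      omega
    have hloc : localization n 𝓗 L' = localization n 𝓗 L := by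
      ext H
      simp only [localization, Finset.mem_filter]
      constructor
      · rintro ⟨h𝓗, hle⟩; exact ⟨h𝓗, hLL'.trans hle⟩
      · rintro ⟨h𝓗, hle⟩
        exact ⟨h𝓗, Finset.inf_le (Finset.mem_filter.2 ⟨h𝓗, hle⟩)⟩
    have hcd : codim n L' ≤ codim n L := by
      have : Module.finrank ℂ L ≤ Module.finrank ℂ L' := Submodule.finrank_mono hLL'
      unfold codim; omega
    have hmain := main L' ⟨localization n 𝓗 L, Finset.filter_subset _ _, rfl⟩ hL'bot hL'top
    rw [hloc] at hmain
    calc ∑ H ∈ localization n 𝓗 L, a H < (codim n L' : ℝ) := hmain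
      _ ≤ (codim n L : ℝ) := by exact_mod_cast hcd
  · rw [Finset.not_nonempty_iff_eq_empty.1 hne, Finset.sum_empty]
    exact_mod_cast codim_pos n htop
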